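/- (Linear programming bound for potential energy on the sphere) Let f : (0,4] → ℝ, and suppose h : [−1,1] → ℝ is a polynomial with h(t) ≤ f(2−2t) for all t ∈ [−1,1) that can be written h(t) = ∑_{i=0}^d α_i C_i^{n/2−1}(t) with all α_i ≥ 0, where C_i^{n/2−1} are the ultraspherical (Gegenbauer) polynomials. Then for every finite set C ⊂ S^{n−1} of N points, ∑_{x,y∈C, x≠y} f(|x−y|²) ≥ N² α₀ − N h(1). -/

import Mathlib

open Polynomial Classical
noncomputable section

/-- The Gegenbauer (ultraspherical) polynomials `C_i^λ`, with `C₀ = 1`, `C₁ = 2λt`, and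
`i C_i(t) = 2(i+λ-1) t C_{i-1}(t) - (i+2λ-2) C_{i-2}(t)`. -/
noncomputable def gegenbauer (lam : ℝ) : ℕ → Polynomial ℝ
  | 0 => 1
  | 1 => C (2 * lam) * X
  | (i + 2) =>
      C (2 * ((i : ℝ) + 2 + lam - 1) / ((i : ℝ) + 2)) * X * gegenbauer lam (i + 1)
        - C (((i : ℝ) + 2 + 2 * lam - 2) / ((i : ℝ) + 2)) * gegenbauer lam i

namespace StmtAux
def gc (lam : ℝ) (i k : ℕ) : ℝ :=
  if 2*k ≤ i then
    (-1)^k * 2^(i-2*k) / ((k.factorial : ℝ) * ((i-2*k).factorial : ℝ)) *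
      ∏ j ∈ Finset.range (i-k), (lam + j)
  else 0

lemma gc_of_le (lam : ℝ) {i k : ℕ} (h : 2*k ≤ i) : gc lam i k =
    (-1)^k * 2^(i-2*k) / ((k.factorial : ℝ) * ((i-2*k).factorial : ℝ)) *
      ∏ j ∈ Finset.range (i-k), (lam + j) := if_pos h

lemma gc_of_gt (lam : ℝ) {i k : ℕ} (h : i < 2*k) : gc lam i k = 0 := if_neg (by omega)

lemma factorial_ne (m : ℕ) : ((m.factorial : ℝ)) ≠ 0 :=
  Nat.cast_ne_zero.2 (Nat.factorial_ne_zero _)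

lemma gc_rec (lam : ℝ) (i k : ℕ) :
    ((i:ℝ)+2) * gc lam (i+2) k
      = 2*((i:ℝ)+2+lam-1) * gc lam (i+1) k
        - ((i:ℝ)+2+2*lam-2) * (if k = 0 then 0 else gc lam i (k-1)) := by
  rcases le_or_gt (2*k) (i+1) with hk | hk
  · rcases Nat.eq_zero_or_pos k with rfl | hkpos
    · -- k = 0
      rw [if_pos rfl, gc_of_le lam (by omega : 2*0 ≤ i+2),
        gc_of_le lam (by omega : 2*0 ≤ i+1)]
      simp only [Nat.sub_zero, Nat.mul_zero, pow_zero]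
      rw [Finset.prod_range_succ, Nat.factorial_succ (i+1)]
      push_cast
      field_simp
      ring
    · -- 1 ≤ k, 2k ≤ i+1
      obtain ⟨m, rfl⟩ : ∃ m, k = m + 1 := ⟨k - 1, by omega⟩
      obtain ⟨a, rfl⟩ : ∃ a, i = 2*m + 1 + a := ⟨i - (2*m+1), by omega⟩
      rw [if_neg (Nat.succ_ne_zero m)]
      rw [gc_of_le lam (by omega), gc_of_le lam (by omega), Nat.add_sub_cancel,
        gc_of_le lam (by omega)]
      have e1 : 2*m + 1 + a + 2 - 2*(m+1) = a + 1 := by omega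
      have e2 : 2*m + 1 + a + 1 - 2*(m+1) = a := by omega
      have e3 : 2*m + 1 + a - 2*m = a + 1 := by omega
      have e4 : 2*m + 1 + a + 2 - (m+1) = (m + 1 + a) + 1 := by omega
      have e5 : 2*m + 1 + a + 1 - (m+1) = m + 1 + a := by omega
      have e6 : 2*m + 1 + a - m = m + 1 + a := by omega
      rw [e1, e2, e3, e4, e5, e6, Finset.prod_range_succ, Nat.factorial_succ a,
        Nat.factorial_succ m]
      push_cast
      field_simp
      ring
  · rcases eq_or_lt_of_le (by omega : i + 2 ≤ 2*k) with he | hlt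
    · -- 2k = i+2
      obtain ⟨m, rfl⟩ : ∃ m, k = m + 1 := ⟨k - 1, by omega⟩
      obtain rfl : i = 2*m := by omega
      rw [if_neg (Nat.succ_ne_zero m), Nat.add_sub_cancel]
      rw [gc_of_le lam (by omega), gc_of_gt lam (by omega), gc_of_le lam (by omega)]
      have e1 : 2*m + 2 - 2*(m+1) = 0 := by omega
      have e3 : 2*m - 2*m = 0 := by omega
      have e4 : 2*m + 2 - (m+1) = m + 1 := by omega
      have e6 : 2*m - m = m := by omega
      rw [e1, e3, e4, e6, Finset.prod_range_succ, Nat.factorial_succ m]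
      push_cast
      field_simp
      ring
    · rw [gc_of_gt lam (by omega), gc_of_gt lam (by omega)]
      rcases Nat.eq_zero_or_pos k with rfl | hkpos
      · omega
      · obtain ⟨m, rfl⟩ : ∃ m, k = m + 1 := ⟨k - 1, by omega⟩
        rw [if_neg (Nat.succ_ne_zero m), Nat.add_sub_cancel, gc_of_gt lam (by omega)]
        ring

lemma gegenbauer_eval (lam : ℝ) (i : ℕ) (t : ℝ) :
    (gegenbauer lam i).eval t = ∑ k ∈ Finset.range (i+1), gc lam i k * t^(i-2*k) := by
  induction i using Nat.strong_induction_on with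
  | _ i ih =>
    match i with
    | 0 =>
      simp [gegenbauer, gc_of_le lam (by omega : 2*0 ≤ 0)]
    | 1 =>
      rw [show gegenbauer lam 1 = C (2*lam) * X from rfl]
      rw [Finset.sum_range_succ, Finset.sum_range_one,
        gc_of_le lam (by omega : 2*0 ≤ 1), gc_of_gt lam (by omega : 1 < 2*1)]
      simp [Finset.prod_range_one]
    | (i + 2) =>
      have h2 : ((i:ℝ) + 2) ≠ 0 := by positivity
      rw [show gegenbauer lam (i+2) =
        C (2 * ((i : ℝ) + 2 + lam - 1) / ((i : ℝ) + 2)) * X * gegenbauer lam (i + 1)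
        - C (((i : ℝ) + 2 + 2 * lam - 2) / ((i : ℝ) + 2)) * gegenbauer lam i from rfl]
      simp only [eval_sub, eval_mul, eval_C, eval_X]
      rw [ih (i+1) (by omega), ih i (by omega)]
      rw [div_mul_eq_mul_div, div_mul_eq_mul_div, div_mul_eq_mul_div, div_sub_div_same, div_eq_iff h2, eq_comm]
      have key : ∀ k ∈ Finset.range (i+3),
          (((i:ℝ)+2) * gc lam (i+2) k) * t^(i+2-2*k)
          = 2*((i:ℝ)+2+lam-1) * (gc lam (i+1) k * t^(i+2-2*k))
            - ((i:ℝ)+2+2*lam-2) *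
              ((if k = 0 then 0 else gc lam i (k-1)) * t^(i+2-2*k)) := by
        intro k _
        rw [gc_rec lam i k]; ring
      calc (∑ k ∈ Finset.range (i+2+1), gc lam (i+2) k * t^(i+2-2*k)) * ((i:ℝ)+2)
          = ∑ k ∈ Finset.range (i+3),
              (((i:ℝ)+2) * gc lam (i+2) k) * t^(i+2-2*k) := by
            rw [Finset.sum_mul]; exact Finset.sum_congr rfl (fun k _ => by ring)
        _ = 2*((i:ℝ)+2+lam-1) * (∑ k ∈ Finset.range (i+3), gc lam (i+1) k * t^(i+2-2*k))
            - ((i:ℝ)+2+2*lam-2) * (∑ k ∈ Finset.range (i+3),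
                (if k = 0 then 0 else gc lam i (k-1)) * t^(i+2-2*k)) := by
            rw [Finset.sum_congr rfl key, Finset.sum_sub_distrib, Finset.mul_sum,
              Finset.mul_sum]
        _ = 2*((i:ℝ)+2+lam-1) *
              (t * ∑ k ∈ Finset.range (i+2), gc lam (i+1) k * t^(i+1-2*k))
            - ((i:ℝ)+2+2*lam-2) *
              (∑ k ∈ Finset.range (i+1), gc lam i k * t^(i-2*k)) := by
            congr 1
            · congr 1
              rw [Finset.sum_range_succ, gc_of_gt lam (by omega : i+1 < 2*(i+2)),
                zero_mul, add_zero, Finset.mul_sum]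
              refine Finset.sum_congr rfl (fun k hk => ?_)
              rcases le_or_gt (2*k) (i+1) with h | h
              · rw [show i+2-2*k = (i+1-2*k)+1 by omega, pow_succ]; ring
              · rw [gc_of_gt lam h, zero_mul, zero_mul, mul_zero]
            · congr 1
              rw [Finset.sum_range_succ']
              simp only [eq_self_iff_true, if_true, zero_mul, add_zero, Nat.succ_ne_zero, ite_false,
                Nat.add_sub_cancel]
              rw [Finset.sum_range_succ, gc_of_gt lam (by omega : i < 2*(i+1)),
                zero_mul, add_zero]
              apply Finset.sum_congr rfl
              intro k hk
              rw [show i+2-2*(k+1) = i-2*k by omega]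
        _ = (2*((i:ℝ)+2+lam-1) * t *
              (∑ k ∈ Finset.range (i+1+1), gc lam (i+1) k * t^(i+1-2*k))
            - ((i:ℝ)+2+2*lam-2) *
              ∑ k ∈ Finset.range (i+1), gc lam i k * t^(i-2*k)) := by ring

section Apolar
open MvPolynomial
variable {n : ℕ}

def w (α : Fin n →₀ ℕ) : ℝ := ∏ j, ((α j).factorial : ℝ)

lemma w_pos (α : Fin n →₀ ℕ) : 0 < w α :=
  Finset.prod_pos fun j _ => by positivity

lemma w_add_single (j : Fin n) (α : Fin n →₀ ℕ) :
    w (Finsupp.single j 1 + α) = ((α j : ℝ) + 1) * w α := by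
  unfold w
  rw [← Finset.prod_compl_mul_prod {j}, ← Finset.prod_compl_mul_prod {j} (f := fun t => ((α t).factorial : ℝ))]
  simp only [Finset.prod_singleton]
  have h1 : ∀ t ∈ ({j} : Finset (Fin n))ᶜ,
      ((((Finsupp.single j 1 + α : Fin n →₀ ℕ)) t).factorial : ℝ)
      = ((α t).factorial : ℝ) := by
    intro t ht
    simp only [Finset.mem_compl, Finset.mem_singleton] at ht
    rw [Finsupp.add_apply, Finsupp.single_eq_of_ne' (Ne.symm ht), zero_add]
  rw [Finset.prod_congr rfl h1, Finsupp.add_apply, Finsupp.single_eq_same,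
    add_comm 1 (α j), Nat.factorial_succ]
  push_cast
  ring

def ip (p q : MvPolynomial (Fin n) ℝ) : ℝ :=
  ∑ α ∈ p.support, w α * p.coeff α * q.coeff α

lemma ip_eq_sum {S : Finset (Fin n →₀ ℕ)} {p : MvPolynomial (Fin n) ℝ}
    (h : p.support ⊆ S) (q : MvPolynomial (Fin n) ℝ) :
    ip p q = ∑ α ∈ S, w α * p.coeff α * q.coeff α := by
  refine Finset.sum_subset h (fun α _ hα => ?_)
  rw [MvPolynomial.notMem_support_iff.mp hα]; ring

lemma ip_symm (p q : MvPolynomial (Fin n) ℝ) : ip p q = ip q p := by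
  rw [ip_eq_sum (Finset.subset_union_left (s₂ := q.support)) q,
    ip_eq_sum (Finset.subset_union_right (s₁ := p.support)) p]
  exact Finset.sum_congr rfl fun α _ => by ring

lemma ip_zero_left (q : MvPolynomial (Fin n) ℝ) : ip 0 q = 0 := by
  simp [ip]

lemma ip_zero_right (p : MvPolynomial (Fin n) ℝ) : ip p 0 = 0 := by
  simp [ip]

lemma ip_add_left (p₁ p₂ q : MvPolynomial (Fin n) ℝ) :
    ip (p₁ + p₂) q = ip p₁ q + ip p₂ q := by
  rw [ip_eq_sum (h := ?_) q, ip_eq_sum (Finset.subset_union_left (s₂ := p₂.support)) q,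
    ip_eq_sum (Finset.subset_union_right (s₁ := p₁.support)) q, ← Finset.sum_add_distrib]
  · exact Finset.sum_congr rfl fun α _ => by rw [MvPolynomial.coeff_add]; ring
  · exact MvPolynomial.support_add

lemma ip_add_right (p q₁ q₂ : MvPolynomial (Fin n) ℝ) :
    ip p (q₁ + q₂) = ip p q₁ + ip p q₂ := by
  rw [ip_symm, ip_add_left, ip_symm q₁, ip_symm q₂]

lemma ip_smul_left (c : ℝ) (p q : MvPolynomial (Fin n) ℝ) :
    ip (c • p) q = c * ip p q := by
  rw [ip_eq_sum (MvPolynomial.support_smul : (c • p).support ⊆ p.support) q, ip,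
    Finset.mul_sum]
  exact Finset.sum_congr rfl fun α _ => by rw [MvPolynomial.coeff_smul]; simp; ring

lemma ip_smul_right (c : ℝ) (p q : MvPolynomial (Fin n) ℝ) :
    ip p (c • q) = c * ip p q := by
  rw [ip_symm, ip_smul_left, ip_symm]

lemma ip_sum_left {ι : Type*} (s : Finset ι) (f : ι → MvPolynomial (Fin n) ℝ)
    (q : MvPolynomial (Fin n) ℝ) : ip (∑ i ∈ s, f i) q = ∑ i ∈ s, ip (f i) q := by
  induction s using Finset.induction_on with
  | empty => simp [ip_zero_left]
  | insert _ _ h ih => rw [Finset.sum_insert h, Finset.sum_insert h, ip_add_left, ih]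

lemma ip_sum_right {ι : Type*} (s : Finset ι) (f : ι → MvPolynomial (Fin n) ℝ)
    (p : MvPolynomial (Fin n) ℝ) : ip p (∑ i ∈ s, f i) = ∑ i ∈ s, ip p (f i) := by
  rw [ip_symm, ip_sum_left]
  exact Finset.sum_congr rfl fun i _ => ip_symm _ _

lemma ip_self_nonneg (p : MvPolynomial (Fin n) ℝ) : 0 ≤ ip p p :=
  Finset.sum_nonneg fun α _ => by
    rw [mul_assoc]
    exact mul_nonneg (w_pos α).le (mul_self_nonneg _)

lemma ip_monomial (α β : Fin n →₀ ℕ) (a b : ℝ) :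
    ip (monomial α a) (monomial β b) = if α = β then w α * a * b else 0 := by
  rcases eq_or_ne a 0 with rfl | ha
  · simp [ip, MvPolynomial.support_monomial]
  · rw [ip_eq_sum (by rw [MvPolynomial.support_monomial, if_neg ha] : (monomial α a).support ⊆ {α}) _,
      Finset.sum_singleton, MvPolynomial.coeff_monomial, MvPolynomial.coeff_monomial]
    by_cases h : α = β
    · subst h; simp
    · rw [if_pos rfl, if_neg (fun hh => h hh.symm), if_neg h]; ring

lemma ip_X_mul (j : Fin n) (p q : MvPolynomial (Fin n) ℝ) :
    ip (X j * p) q = ip p (pderiv j q) := by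
  have base : ∀ (α β : Fin n →₀ ℕ) (a b : ℝ),
      ip (X j * monomial α a) (monomial β b)
        = ip (monomial α a) (pderiv j (monomial β b)) := by
    intro α β a b
    rw [show (X j : MvPolynomial (Fin n) ℝ) = monomial (Finsupp.single j 1) 1 from rfl,
      monomial_mul, pderiv_monomial, ip_monomial, ip_monomial, one_mul]
    rcases Nat.eq_zero_or_pos (β j) with hβ | hβ
    · rw [if_neg (fun hc => by
        apply_fun (fun γ => γ j) at hc
        simp [Finsupp.add_apply, hβ] at hc)]
      split_ifs with h2
      · rw [hβ]; push_cast; ring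
      · rfl
    · have hle : Finsupp.single j 1 ≤ β := by
        rw [Finsupp.single_le_iff]; omega
      by_cases hc : Finsupp.single j 1 + α = β
      · rw [if_pos hc, if_pos (by rw [← hc]; exact (add_tsub_cancel_left _ _).symm)]
        rw [w_add_single, ← hc]
        have : ((Finsupp.single j 1 + α : Fin n →₀ ℕ)) j = α j + 1 := by
          simp [Finsupp.add_apply, Nat.add_comm]
        rw [this]
        push_cast
        ring
      · rw [if_neg hc, if_neg]
        intro hc2
        apply hc
        rw [hc2, add_comm, tsub_add_cancel_of_le hle]
  calc ip (X j * p) q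
      = ∑ α ∈ p.support, ∑ β ∈ q.support,
          ip (X j * monomial α (p.coeff α)) (monomial β (q.coeff β)) := by
        conv_lhs => rw [p.as_sum, q.as_sum]
        rw [Finset.mul_sum, ip_sum_left]
        exact Finset.sum_congr rfl fun α _ => ip_sum_right _ _ _
    _ = ∑ α ∈ p.support, ∑ β ∈ q.support,
          ip (monomial α (p.coeff α)) (pderiv j (monomial β (q.coeff β))) :=
        Finset.sum_congr rfl fun α _ => Finset.sum_congr rfl fun β _ => base α β _ _
    _ = ip p (pderiv j q) := by
        conv_rhs => rw [p.as_sum, q.as_sum]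
        rw [map_sum, ip_sum_left]
        exact Finset.sum_congr rfl fun α _ => (ip_sum_right _ _ _).symm

def Lp (x : Fin n → ℝ) : MvPolynomial (Fin n) ℝ := ∑ j, MvPolynomial.C (x j) * X j
def Rp (n : ℕ) : MvPolynomial (Fin n) ℝ := ∑ j : Fin n, X j * X j
def lap (p : MvPolynomial (Fin n) ℝ) : MvPolynomial (Fin n) ℝ := ∑ j, pderiv j (pderiv j p)

lemma ip_C_mul_right (a : ℝ) (p q : MvPolynomial (Fin n) ℝ) :
    ip p (MvPolynomial.C a * q) = a * ip p q := by
  rw [← MvPolynomial.smul_eq_C_mul, ip_smul_right]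

lemma ip_C_mul_left (a : ℝ) (p q : MvPolynomial (Fin n) ℝ) :
    ip (MvPolynomial.C a * p) q = a * ip p q := by
  rw [← MvPolynomial.smul_eq_C_mul, ip_smul_left]

lemma ip_R_mul (p q : MvPolynomial (Fin n) ℝ) : ip (Rp n * p) q = ip p (lap q) := by
  rw [Rp, Finset.sum_mul, ip_sum_left, lap, ip_sum_right]
  refine Finset.sum_congr rfl fun j _ => ?_
  rw [mul_assoc, ip_X_mul, ip_X_mul]

lemma pderiv_Lp (j : Fin n) (x : Fin n → ℝ) :
    pderiv j (Lp x) = MvPolynomial.C (x j) := by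
  rw [Lp, map_sum]
  rw [Finset.sum_eq_single j]
  · rw [pderiv_C_mul, pderiv_X_self, mul_one]
  · intro t _ ht
    rw [pderiv_C_mul, pderiv_X_of_ne ht, mul_zero]
  · intro hj; exact absurd (Finset.mem_univ j) hj

lemma pderiv_Lp_pow (j : Fin n) (x : Fin n → ℝ) (m : ℕ) :
    pderiv j (Lp x ^ m) = MvPolynomial.C ((m : ℝ) * x j) * Lp x ^ (m-1) := by
  rw [Derivation.leibniz_pow, pderiv_Lp, smul_eq_mul, nsmul_eq_mul,
    MvPolynomial.C_mul]
  rw [← MvPolynomial.C_eq_coe_nat]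
  ring

lemma lap_Lp_pow (y : Fin n → ℝ) (m : ℕ) :
    lap (Lp y ^ m)
      = MvPolynomial.C ((m : ℝ) * ((m-1 : ℕ) : ℝ) * ∑ j, y j * y j) * Lp y ^ (m-2) := by
  rw [lap]
  have : ∀ j : Fin n, pderiv j (pderiv j (Lp y ^ m))
      = MvPolynomial.C ((m:ℝ) * ((m-1:ℕ):ℝ) * (y j * y j)) * Lp y ^ (m-2) := by
    intro j
    rw [pderiv_Lp_pow, pderiv_C_mul, pderiv_Lp_pow]
    rw [show m - 1 - 1 = m - 2 from rfl, ← mul_assoc, ← MvPolynomial.C_mul]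
    congr 2
    ring
  rw [Finset.sum_congr rfl (fun j _ => this j), ← Finset.sum_mul, ← map_sum]
  congr 1
  rw [← Finset.mul_sum]

lemma ip_Lp_mul (x : Fin n → ℝ) (p q : MvPolynomial (Fin n) ℝ) :
    ip (Lp x * p) q = ∑ j, x j * ip p (pderiv j q) := by
  rw [Lp, Finset.sum_mul, ip_sum_left]
  refine Finset.sum_congr rfl fun j _ => ?_
  rw [mul_assoc, ip_C_mul_left, ip_X_mul]

lemma ip_one_one : ip (1 : MvPolynomial (Fin n) ℝ) 1 = 1 := by
  have h1 : (1 : MvPolynomial (Fin n) ℝ) = MvPolynomial.monomial 0 1 := by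
    rw [MvPolynomial.monomial_zero']; simp
  rw [h1, ip_monomial, if_pos rfl, w]
  simp

lemma ip_Lp_pow_Lp_pow (x y : Fin n → ℝ) (m : ℕ) :
    ip (Lp x ^ m) (Lp y ^ m) = (m.factorial : ℝ) * (∑ j, x j * y j)^m := by
  induction m with
  | zero => simpa using ip_one_one
  | succ m ih =>
    rw [pow_succ (Lp x), mul_comm (Lp x ^ m), ip_Lp_mul]
    have : ∀ j : Fin n, x j * ip (Lp x ^ m) (pderiv j (Lp y ^ (m+1)))
        = (x j * y j) * ((m:ℝ)+1) * ((m.factorial : ℝ) * (∑ j, x j * y j)^m) := by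
      intro j
      rw [pderiv_Lp_pow, Nat.add_sub_cancel, ip_C_mul_right, ih]
      push_cast
      ring
    rw [Finset.sum_congr rfl (fun j _ => this j), ← Finset.sum_mul, ← Finset.sum_mul,
      Nat.factorial_succ]
    push_cast
    ring

lemma ip_LR_Lp (x y : Fin n → ℝ) (hy : ∑ j, y j * y j = 1) (a l : ℕ) :
    ip (Lp x ^ a * Rp n ^ l) (Lp y ^ (a + 2*l))
      = ((a + 2*l).factorial : ℝ) * (∑ j, x j * y j)^a := by
  induction l with
  | zero => simpa using ip_Lp_pow_Lp_pow x y a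
  | succ l ih =>
    have h1 : Lp x ^ a * Rp n ^ (l+1) = Rp n * (Lp x ^ a * Rp n ^ l) := by ring
    rw [h1, ip_R_mul, show a + 2*(l+1) = (a + 2*l) + 2 by ring, lap_Lp_pow, hy,
      ip_C_mul_right, show a + 2*l + 2 - 2 = a + 2*l from by omega,
      show a + 2*l + 2 - 1 = a + 2*l + 1 from by omega, ih,
      Nat.factorial_succ (a + 2*l + 1), Nat.factorial_succ (a + 2*l)]
    push_cast
    ring

lemma pderiv_Rp_pow (j : Fin n) (k : ℕ) :
    pderiv j (Rp n ^ k) = MvPolynomial.C (2*(k:ℝ)) * (X j * Rp n ^ (k-1)) := by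
  have hR : pderiv j (Rp n) = MvPolynomial.C 2 * X j := by
    rw [Rp, map_sum]
    rw [Finset.sum_eq_single j]
    · rw [pderiv_mul, pderiv_X_self, one_mul, mul_one, ← two_mul,
        (map_ofNat (MvPolynomial.C (σ := Fin n) (R := ℝ)) 2).symm]
    · intro t _ ht
      rw [pderiv_mul, pderiv_X_of_ne ht, zero_mul, mul_zero, add_zero]
    · intro hj; exact absurd (Finset.mem_univ j) hj
  rw [Derivation.leibniz_pow, hR, smul_eq_mul, nsmul_eq_mul, ← MvPolynomial.C_eq_coe_nat,
    MvPolynomial.C_mul]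
  push_cast
  ring

lemma pderiv_LR (x : Fin n → ℝ) (j : Fin n) (a k : ℕ) :
    pderiv j (Lp x ^ a * Rp n ^ k)
      = MvPolynomial.C ((a:ℝ) * x j) * (Lp x ^ (a-1) * Rp n ^ k)
        + MvPolynomial.C (2*(k:ℝ)) * (X j * (Lp x ^ a * Rp n ^ (k-1))) := by
  rw [pderiv_mul, pderiv_Lp_pow, pderiv_Rp_pow]
  ring

/-- helper to absorb `p * p^(a-1)` when the coefficient contains `a` -/
lemma absorb_pow (a : ℕ) (c : ℝ) (p q : MvPolynomial (Fin n) ℝ) :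
    MvPolynomial.C ((a:ℝ) * c) * (p * (p ^ (a-1) * q))
      = MvPolynomial.C ((a:ℝ) * c) * (p ^ a * q) := by
  cases a with
  | zero => simp
  | succ a' =>
    rw [Nat.add_sub_cancel, pow_succ]
    ring

lemma absorb_pow' (a : ℕ) (c : ℝ) (p q : MvPolynomial (Fin n) ℝ) :
    p * (MvPolynomial.C ((a:ℝ) * c) * (p ^ (a-1) * q))
      = MvPolynomial.C ((a:ℝ) * c) * (p ^ a * q) := by
  cases a with
  | zero => simp
  | succ a' =>
    rw [Nat.add_sub_cancel, pow_succ]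
    ring

lemma lap_LR (x : Fin n → ℝ) (hx : ∑ j, x j * x j = 1) (a k : ℕ) :
    lap (Lp x ^ a * Rp n ^ k)
      = MvPolynomial.C ((a:ℝ) * ((a-1 : ℕ):ℝ)) * (Lp x ^ (a-2) * Rp n ^ k)
        + MvPolynomial.C
            (2*(k:ℝ)*((n:ℝ) + 2*((k-1 : ℕ):ℝ)) + 2*(2*((a:ℝ)*(k:ℝ))))
            * (Lp x ^ a * Rp n ^ (k-1)) := by
  have step : ∀ j : Fin n, pderiv j (pderiv j (Lp x ^ a * Rp n ^ k))
      = (MvPolynomial.C (x j) * MvPolynomial.C (x j)) *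
          (MvPolynomial.C ((a:ℝ) * ((a-1:ℕ):ℝ)) * (Lp x ^ (a-1-1) * Rp n ^ k))
      + (MvPolynomial.C (x j) * X j) *
          (MvPolynomial.C ((a:ℝ) * (2*(k:ℝ))) * (Lp x ^ (a-1) * Rp n ^ (k-1)))
      + MvPolynomial.C (2*(k:ℝ)) * (Lp x ^ a * Rp n ^ (k-1))
      + (MvPolynomial.C (x j) * X j) *
          (MvPolynomial.C ((a:ℝ) * (2*(k:ℝ))) * (Lp x ^ (a-1) * Rp n ^ (k-1)))
      + (X j * X j) *
          (MvPolynomial.C (((k-1:ℕ):ℝ) * (2*(2*(k:ℝ)))) * (Rp n ^ (k-1-1) * Lp x ^ a)) := by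
    intro j
    rw [pderiv_LR, map_add, pderiv_C_mul, pderiv_C_mul, pderiv_LR,
      pderiv_mul (f := X j), pderiv_X_self, pderiv_LR]
    simp only [MvPolynomial.C_mul]
    ring
  rw [lap, Finset.sum_congr rfl (fun j _ => step j)]
  rw [Finset.sum_add_distrib, Finset.sum_add_distrib, Finset.sum_add_distrib,
    Finset.sum_add_distrib]
  have hC1 : ∑ j : Fin n, MvPolynomial.C (x j) * MvPolynomial.C (x j)
      = (1 : MvPolynomial (Fin n) ℝ) := by
    simp only [← map_mul]
    rw [← map_sum, hx, map_one]
  have hL : ∑ j : Fin n, MvPolynomial.C (x j) * X j = Lp x := rfl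
  have hR : ∑ j : Fin n, X j * X j = Rp n := rfl
  rw [← Finset.sum_mul, ← Finset.sum_mul, ← Finset.sum_mul, ← Finset.sum_mul,
    hC1, hL, hR, one_mul, Finset.sum_const, Finset.card_univ, Fintype.card_fin,
    nsmul_eq_mul, ← MvPolynomial.C_eq_coe_nat]
  rw [absorb_pow', absorb_pow']
  rw [show a - 1 - 1 = a - 2 from by omega]
  simp only [map_add, MvPolynomial.C_mul]
  ring_nf
  simp only [(map_ofNat (MvPolynomial.C (σ := Fin n) (R := ℝ)) 2).symm]
  ring

lemma gc_harm (n i k : ℕ) (hk : 2*(k+1) ≤ i) :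
    ((i:ℝ)-2*k)*((i:ℝ)-2*k-1) * gc ((n:ℝ)/2-1) i k
      + 2*((k:ℝ)+1)*((n:ℝ)+2*(i:ℝ)-2*(k:ℝ)-4) * gc ((n:ℝ)/2-1) i (k+1) = 0 := by
  obtain ⟨c, rfl⟩ : ∃ c, i = 2*k + 2 + c := ⟨i - (2*k+2), by omega⟩
  rw [gc_of_le _ (by omega), gc_of_le _ (by omega)]
  have e1 : 2*k + 2 + c - 2*k = c + 2 := by omega
  have e2 : 2*k + 2 + c - 2*(k+1) = c := by omega
  have e3 : 2*k + 2 + c - k = (k + c + 1) + 1 := by omega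
  have e4 : 2*k + 2 + c - (k+1) = k + c + 1 := by omega
  rw [e1, e2, e3, e4, Finset.prod_range_succ, Nat.factorial_succ (c+1),
    Nat.factorial_succ c, Nat.factorial_succ k]
  push_cast
  field_simp
  ring

def qpoly (n i : ℕ) (x : Fin n → ℝ) : MvPolynomial (Fin n) ℝ :=
  ∑ k ∈ Finset.range (i/2 + 1),
    MvPolynomial.C (gc ((n:ℝ)/2-1) i k) * (Lp x ^ (i - 2*k) * Rp n ^ k)

lemma lap_C_mul (c : ℝ) (p : MvPolynomial (Fin n) ℝ) :
    lap (MvPolynomial.C c * p) = MvPolynomial.C c * lap p := by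
  unfold lap
  rw [Finset.mul_sum]
  exact Finset.sum_congr rfl fun j _ => by rw [pderiv_C_mul, pderiv_C_mul]

lemma lap_sum {ι : Type*} (s : Finset ι) (f : ι → MvPolynomial (Fin n) ℝ) :
    lap (∑ i ∈ s, f i) = ∑ i ∈ s, lap (f i) := by
  unfold lap
  rw [Finset.sum_comm]
  exact Finset.sum_congr rfl fun j _ => by rw [map_sum, map_sum]

lemma lap_qpoly (i : ℕ) (x : Fin n → ℝ) (hx : ∑ j, x j * x j = 1) :
    lap (qpoly n i x) = 0 := by
  unfold qpoly
  rw [lap_sum]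
  have step : ∀ k ∈ Finset.range (i/2 + 1),
      lap (MvPolynomial.C (gc ((n:ℝ)/2-1) i k) * (Lp x ^ (i - 2*k) * Rp n ^ k))
      = MvPolynomial.C (gc ((n:ℝ)/2-1) i k * ((↑(i-2*k):ℝ) * ((i-2*k-1 : ℕ):ℝ)))
          * (Lp x ^ (i-2*k-2) * Rp n ^ k)
        + MvPolynomial.C (gc ((n:ℝ)/2-1) i k *
            (2*(k:ℝ)*((n:ℝ) + 2*((k-1 : ℕ):ℝ)) + 2*(2*((↑(i-2*k):ℝ)*(k:ℝ)))))
          * (Lp x ^ (i-2*k) * Rp n ^ (k-1)) := by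
    intro k _
    rw [lap_C_mul, lap_LR x hx]
    simp only [MvPolynomial.C_mul]
    ring
  rw [Finset.sum_congr rfl step, Finset.sum_add_distrib]
  -- first sum: drop the last term, which vanishes
  rw [Finset.sum_range_succ]
  have hlast : MvPolynomial.C (gc ((n:ℝ)/2-1) i (i/2) *
      ((↑(i-2*(i/2)):ℝ) * ((i-2*(i/2)-1 : ℕ):ℝ)))
      * (Lp x ^ (i-2*(i/2)-2) * Rp n ^ (i/2)) = 0 := by
    have : i - 2*(i/2) - 1 = 0 := by omega
    rcases (by omega : i - 2*(i/2) = 0 ∨ i - 2*(i/2) = 1) with h0 | h0 <;>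
      rw [this, h0] <;> norm_num
  rw [hlast, add_zero]
  -- second sum: peel the k = 0 term, which vanishes
  rw [Finset.sum_range_succ']
  have hzero : MvPolynomial.C (gc ((n:ℝ)/2-1) i 0 *
      (2*((0:ℕ):ℝ)*((n:ℝ) + 2*((0-1 : ℕ):ℝ)) + 2*(2*((↑(i-2*0):ℝ)*((0:ℕ):ℝ)))))
      * (Lp x ^ (i-2*0) * Rp n ^ (0-1)) = 0 := by norm_num
  rw [hzero, add_zero, ← Finset.sum_add_distrib]
  apply Finset.sum_eq_zero
  intro k hk
  rw [Finset.mem_range] at hk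
  have h2k : 2*(k+1) ≤ i := by omega
  have e1 : i - 2*k - 2 = i - 2*(k+1) := by omega
  have e2 : k + 1 - 1 = k := by omega
  rw [e1, e2, ← add_mul, ← map_add]
  have hcast1 : (↑(i-2*k) : ℝ) = (i:ℝ) - 2*k := by
    have : 2*k ≤ i := by omega
    push_cast [this]; ring
  have hcast2 : ((i-2*k-1 : ℕ) : ℝ) = (i:ℝ) - 2*k - 1 := by
    have : 2*k + 1 ≤ i := by omega
    push_cast [Nat.sub_sub, this]; ring
  have hcast3 : (↑(i-2*(k+1)) : ℝ) = (i:ℝ) - 2*k - 2 := by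
    push_cast [h2k]; ring
  have hmain := gc_harm n i k h2k
  have : gc ((n:ℝ)/2-1) i k * ((↑(i-2*k):ℝ) * ((i-2*k-1 : ℕ):ℝ))
      + gc ((n:ℝ)/2-1) i (k+1) *
        (2*((k+1:ℕ):ℝ)*((n:ℝ) + 2*((k:ℕ):ℝ)) + 2*(2*((↑(i-2*(k+1)):ℝ)*((k+1:ℕ):ℝ)))) = 0 := by
    rw [hcast1, hcast2, hcast3]
    push_cast
    nlinarith [hmain]
  rw [this, map_zero, zero_mul]

lemma ip_qpoly (i : ℕ) (x y : Fin n → ℝ) (hx : ∑ j, x j * x j = 1)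
    (hy : ∑ j, y j * y j = 1) :
    ip (qpoly n i x) (qpoly n i y)
      = gc ((n:ℝ)/2-1) i 0 * ((i.factorial : ℝ) *
          ∑ k ∈ Finset.range (i/2 + 1),
            gc ((n:ℝ)/2-1) i k * (∑ j, x j * y j)^(i-2*k)) := by
  nth_rewrite 2 [qpoly]
  rw [ip_sum_right]
  rw [Finset.sum_eq_single_of_mem 0 (Finset.mem_range.2 (by omega))]
  · rw [ip_C_mul_right, pow_zero, mul_one, Nat.mul_zero, Nat.sub_zero]
    rw [qpoly, ip_sum_left]
    have hterm : ∀ l ∈ Finset.range (i/2+1),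
        ip (MvPolynomial.C (gc ((n:ℝ)/2-1) i l) * (Lp x ^ (i - 2*l) * Rp n ^ l)) (Lp y ^ i)
        = gc ((n:ℝ)/2-1) i l * ((i.factorial : ℝ) * (∑ j, x j * y j)^(i-2*l)) := by
      intro l hl
      rw [Finset.mem_range] at hl
      have h2l : 2*l ≤ i := by omega
      rw [ip_C_mul_left]
      have h := ip_LR_Lp x y hy (i - 2*l) l
      rw [show i - 2*l + 2*l = i from by omega] at h
      rw [h]
    rw [Finset.sum_congr rfl hterm]
    simp only [Finset.mul_sum]
    apply Finset.sum_congr rfl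
    intro l _
    ring
  · intro k hk hk0
    obtain ⟨m, rfl⟩ : ∃ m, k = m + 1 := ⟨k - 1, by omega⟩
    have hsplit : Lp y ^ (i - 2*(m+1)) * Rp n ^ (m+1)
        = Rp n * (Lp y ^ (i - 2*(m+1)) * Rp n ^ m) := by
      rw [pow_succ]; ring
    rw [ip_C_mul_right, ip_symm, hsplit, ip_R_mul, lap_qpoly i x hx, ip_zero_right,
      mul_zero]

lemma gc_nonneg (n i k : ℕ) (hn : 2 ≤ n) (hk : k = 0) :
    0 ≤ gc ((n:ℝ)/2-1) i k := by
  subst hk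
  rw [gc_of_le _ (by omega)]
  have : (0:ℝ) ≤ ∏ j ∈ Finset.range (i-0), ((n:ℝ)/2-1 + j) := by
    apply Finset.prod_nonneg
    intro j _
    have : (2:ℝ) ≤ n := by exact_mod_cast hn
    have : (0:ℝ) ≤ j := Nat.cast_nonneg j
    nlinarith
  simp only [pow_zero, Nat.mul_zero, Nat.sub_zero]
  positivity

lemma gc_all_zero (n i : ℕ) (hn : 2 ≤ n) (hg : gc ((n:ℝ)/2-1) i 0 = 0) :
    ∀ k, k ≤ i/2 → gc ((n:ℝ)/2-1) i k = 0 := by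
  have h2 : (2:ℝ) ≤ n := by exact_mod_cast hn
  rw [gc_of_le _ (by omega)] at hg
  have hprod : ∏ j ∈ Finset.range (i-0), ((n:ℝ)/2-1 + j) = 0 := by
    by_contra hne
    apply absurd hg
    simp only [pow_zero, Nat.mul_zero, Nat.sub_zero] at hne ⊢
    have := factorial_ne i
    positivity
  obtain ⟨j0, hj0, hj0z⟩ := Finset.prod_eq_zero_iff.1 hprod
  have hj00 : j0 = 0 := by
    by_contra hne
    have h1 : (1:ℝ) ≤ j0 := by
      have : 1 ≤ j0 := Nat.one_le_iff_ne_zero.2 hne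
      exact_mod_cast this
    nlinarith
  subst hj00
  have hlam : (n:ℝ)/2 - 1 = 0 := by simpa using hj0z
  have hipos : 1 ≤ i := by
    rw [Nat.sub_zero] at hj0
    exact Finset.mem_range.1 hj0
  intro k hk
  rw [gc_of_le _ (by omega)]
  have hmem : 0 ∈ Finset.range (i - k) := Finset.mem_range.2 (by omega)
  rw [Finset.prod_eq_zero hmem (by rw [hlam]; simp), mul_zero]

lemma pd {ι : Type*} (n i : ℕ) (hn : 2 ≤ n) (s : Finset ι) (x : ι → (Fin n → ℝ))
    (hx : ∀ c ∈ s, ∑ j, x c j * x c j = 1) :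
    0 ≤ ∑ c ∈ s, ∑ c' ∈ s,
      (gegenbauer ((n:ℝ)/2-1) i).eval (∑ j, x c j * x c' j) := by
  have heval : ∀ (t : ℝ), (gegenbauer ((n:ℝ)/2-1) i).eval t
      = ∑ k ∈ Finset.range (i/2+1), gc ((n:ℝ)/2-1) i k * t^(i-2*k) := by
    intro t
    rw [gegenbauer_eval]
    refine (Finset.sum_subset (fun k hk => Finset.mem_range.2 ?_) fun k hk hnk => ?_).symm
    · have := Finset.mem_range.1 hk; omega
    · rw [Finset.mem_range] at hk hnk
      rw [gc_of_gt _ (by omega), zero_mul]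
  by_cases hg : gc ((n:ℝ)/2-1) i 0 = 0
  · have hz := gc_all_zero n i hn hg
    have : ∀ c ∈ s, ∀ c' ∈ s, (gegenbauer ((n:ℝ)/2-1) i).eval (∑ j, x c j * x c' j) = 0 := by
      intro c _ c' _
      rw [heval]
      refine Finset.sum_eq_zero fun k hk => ?_
      rw [hz k (by have := Finset.mem_range.1 hk; omega), zero_mul]
    rw [Finset.sum_congr rfl fun c hc => Finset.sum_eq_zero (this c hc)]
    simp
  · have hgpos : 0 < gc ((n:ℝ)/2-1) i 0 :=
      lt_of_le_of_ne (gc_nonneg n i 0 hn rfl) (Ne.symm hg)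
    have key : ∀ c ∈ s, ∀ c' ∈ s, (gegenbauer ((n:ℝ)/2-1) i).eval (∑ j, x c j * x c' j)
        = (gc ((n:ℝ)/2-1) i 0 * (i.factorial : ℝ))⁻¹
            * ip (qpoly n i (x c)) (qpoly n i (x c')) := by
      intro c hc c' hc'
      rw [ip_qpoly i (x c) (x c') (hx c hc) (hx c' hc'), heval]
      have hne : gc ((n:ℝ)/2-1) i 0 * (i.factorial : ℝ) ≠ 0 :=
        mul_ne_zero hg (factorial_ne i)
      rw [inv_mul_eq_div, eq_div_iff hne]
      ring
    rw [Finset.sum_congr rfl fun c hc => Finset.sum_congr rfl (key c hc)]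
    have : ∑ c ∈ s, ∑ c' ∈ s, (gc ((n:ℝ)/2-1) i 0 * (i.factorial : ℝ))⁻¹
            * ip (qpoly n i (x c)) (qpoly n i (x c'))
        = (gc ((n:ℝ)/2-1) i 0 * (i.factorial : ℝ))⁻¹
            * ip (∑ c ∈ s, qpoly n i (x c)) (∑ c' ∈ s, qpoly n i (x c')) := by
      rw [ip_sum_left, Finset.mul_sum]
      refine Finset.sum_congr rfl fun c _ => ?_
      rw [ip_sum_right, Finset.mul_sum]
    rw [this]
    have hipnn := ip_self_nonneg (∑ c ∈ s, qpoly n i (x c))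
    have hinv : 0 ≤ (gc ((n:ℝ)/2-1) i 0 * (i.factorial : ℝ))⁻¹ := by positivity
    exact mul_nonneg hinv hipnn

end Apolar
end StmtAux

/-- Linear programming bound for potential energy on the sphere: if `h(t) ≤ f(2-2t)` on
`[-1,1)` and `h = ∑ αᵢ C_i^{n/2-1}` with `αᵢ ≥ 0`, then any `N` points on `S^{n-1}` have
`f`-potential energy at least `N² α₀ - N h(1)`. -/
theorem stmt_11 (n : ℕ) (hn : 2 ≤ n) (f : ℝ → ℝ) (d : ℕ) (α : ℕ → ℝ)
    (hα : ∀ i ≤ d, 0 ≤ α i) (h : ℝ → ℝ)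
    (hexp : ∀ t : ℝ, h t =
      ∑ i ∈ Finset.range (d + 1), α i * (gegenbauer ((n : ℝ) / 2 - 1) i).eval t)
    (hbound : ∀ t ∈ Set.Ico (-1 : ℝ) 1, h t ≤ f (2 - 2 * t))
    (C : Finset (EuclideanSpace ℝ (Fin n))) (hC : ∀ x ∈ C, ‖x‖ = 1)
    (N : ℕ) (hN : C.card = N) :
    (N : ℝ) ^ 2 * α 0 - N * h 1 ≤ ∑ x ∈ C, ∑ y ∈ C.erase x, f (‖x - y‖ ^ 2) := by
  classical
  have hsq : ∀ x : EuclideanSpace ℝ (Fin n), ‖x‖^2 = ∑ j, x j * x j := by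
    intro x
    rw [EuclideanSpace.norm_eq, Real.sq_sqrt (by positivity)]
    exact Finset.sum_congr rfl fun j _ => by rw [Real.norm_eq_abs, sq_abs, sq]
  have hu : ∀ x ∈ C, ∑ j, x j * x j = 1 := by
    intro x hx
    have h2 : ‖x‖^2 = 1 := by rw [hC x hx]; norm_num
    rw [hsq] at h2
    exact h2
  have hdist : ∀ x ∈ C, ∀ y ∈ C, ‖x - y‖^2 = 2 - 2 * ∑ j, x j * y j := by
    intro x hx y hy
    rw [hsq (x-y)]
    have e : ∀ j, (x - y) j * (x - y) j = x j * x j + y j * y j - 2 * (x j * y j) := by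
      intro j
      have : (x - y) j = x j - y j := rfl
      rw [this]; ring
    rw [Finset.sum_congr rfl fun j _ => e j, Finset.sum_sub_distrib,
      Finset.sum_add_distrib, hu x hx, hu y hy, ← Finset.mul_sum]
    ring
  have hone : ∀ x ∈ C, ∀ y ∈ C, x ≠ y → (∑ j, x j * y j) ∈ Set.Ico (-1:ℝ) 1 := by
    intro x hx y hy hxy
    constructor
    · have e : ∀ j, (x + y) j * (x + y) j = x j * x j + y j * y j + 2 * (x j * y j) := by
        intro j
        have : (x + y) j = x j + y j := rfl
        rw [this]; ring
      have h0 : (0:ℝ) ≤ ∑ j, (x + y) j * (x + y) j :=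
        Finset.sum_nonneg fun j _ => mul_self_nonneg _
      rw [Finset.sum_congr rfl fun j _ => e j, Finset.sum_add_distrib,
        Finset.sum_add_distrib, hu x hx, hu y hy, ← Finset.mul_sum] at h0
      linarith
    · have hpos : 0 < ‖x - y‖^2 := by
        have : x - y ≠ 0 := sub_ne_zero.2 hxy
        have := norm_pos_iff.2 this
        positivity
      rw [hdist x hx y hy] at hpos
      linarith
  have hT0 : ∑ x ∈ C, ∑ y ∈ C,
      (gegenbauer ((n : ℝ) / 2 - 1) 0).eval (∑ j, x j * y j) = (N:ℝ)^2 := by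
    rw [show gegenbauer ((n : ℝ) / 2 - 1) 0 = 1 from rfl]
    simp only [Polynomial.eval_one, Finset.sum_const, nsmul_eq_mul, mul_one, hN]
    push_cast
    ring
  have hTnn : ∀ i : ℕ, 0 ≤ ∑ x ∈ C, ∑ y ∈ C,
      (gegenbauer ((n : ℝ) / 2 - 1) i).eval (∑ j, x j * y j) :=
    fun i => StmtAux.pd n i hn C (fun c j => c j) hu
  have hh : ∑ x ∈ C, ∑ y ∈ C, h (∑ j, x j * y j)
      = ∑ i ∈ Finset.range (d+1), α i * ∑ x ∈ C, ∑ y ∈ C,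
          (gegenbauer ((n : ℝ) / 2 - 1) i).eval (∑ j, x j * y j) := by
    rw [Finset.sum_congr rfl (fun x _ => Finset.sum_congr rfl (fun y _ => hexp _))]
    rw [Finset.sum_congr rfl (fun x (_ : x ∈ C) => Finset.sum_comm)]
    rw [Finset.sum_comm]
    refine Finset.sum_congr rfl fun i _ => ?_
    rw [Finset.mul_sum]
    refine Finset.sum_congr rfl fun x _ => ?_
    rw [Finset.mul_sum]
  have hlow : α 0 * (N:ℝ)^2 ≤ ∑ x ∈ C, ∑ y ∈ C, h (∑ j, x j * y j) := by
    rw [hh]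
    have h0 : α 0 * ∑ x ∈ C, ∑ y ∈ C,
        (gegenbauer ((n : ℝ) / 2 - 1) 0).eval (∑ j, x j * y j)
        ≤ ∑ i ∈ Finset.range (d+1), α i * ∑ x ∈ C, ∑ y ∈ C,
          (gegenbauer ((n : ℝ) / 2 - 1) i).eval (∑ j, x j * y j) :=
      Finset.single_le_sum (f := fun i => α i * ∑ x ∈ C, ∑ y ∈ C,
        (gegenbauer ((n : ℝ) / 2 - 1) i).eval (∑ j, x j * y j))
        (fun i hi => mul_nonneg (hα i (by have := Finset.mem_range.1 hi; omega)) (hTnn i))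
        (Finset.mem_range.2 (by omega : 0 < d + 1))
    rw [hT0] at h0
    exact h0
  have hsplit : ∑ x ∈ C, ∑ y ∈ C, h (∑ j, x j * y j)
      = (N:ℝ) * h 1 + ∑ x ∈ C, ∑ y ∈ C.erase x, h (∑ j, x j * y j) := by
    have e : ∀ x ∈ C, ∑ y ∈ C, h (∑ j, x j * y j)
        = h 1 + ∑ y ∈ C.erase x, h (∑ j, x j * y j) := by
      intro x hx
      rw [← Finset.add_sum_erase _ _ hx, hu x hx]
    rw [Finset.sum_congr rfl e, Finset.sum_add_distrib, Finset.sum_const, hN,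
      nsmul_eq_mul]
  have hcmp : ∑ x ∈ C, ∑ y ∈ C.erase x, h (∑ j, x j * y j)
      ≤ ∑ x ∈ C, ∑ y ∈ C.erase x, f (‖x - y‖^2) := by
    refine Finset.sum_le_sum fun x hx => Finset.sum_le_sum fun y hy => ?_
    have hyC : y ∈ C := Finset.mem_of_mem_erase hy
    have hxy : x ≠ y := fun hh => (Finset.ne_of_mem_erase hy) hh.symm
    have hb := hbound _ (hone x hx y hyC hxy)
    rw [hdist x hx y hyC]
    exact hb
  linarith

end
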